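/- There is an absolute constant C such that for every nonzero q ∈ Z[i], every real N ≥ 1 and every sequence of complex numbers (a_n)_{n ∈ Z[i]}, one has ∑_{r mod q, (r,q)=1} |∑_{n ∈ Z[i], N(n) ≤ N} a_n · e(Tr(n·r/(2q)))|² ≤ C · (N(q) + N) · ∑_{n ∈ Z[i], N(n) ≤ N} |a_n|². -/

import Mathlib

set_option maxHeartbeats 1000000


noncomputable section

/-- `e(t) = exp(2πit)`. -/
def e2pi (t : ℝ) : ℂ := Complex.exp (2 * Real.pi * Complex.I * t)

open Complex

lemma e2pi_add (s t : ℝ) : e2pi (s + t) = e2pi s * e2pi t := by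
  rw [e2pi, e2pi, e2pi, ← Complex.exp_add]
  push_cast; ring_nf

lemma e2pi_int (n : ℤ) : e2pi n = 1 := by
  rw [e2pi, ← Complex.exp_int_mul_two_pi_mul_I n]
  norm_cast; ring_nf

lemma abs_e2pi (t : ℝ) : ‖e2pi t‖ = 1 := by
  rw [e2pi, Complex.norm_exp]
  simp

lemma conj_e2pi (t : ℝ) : (starRingEnd ℂ) (e2pi t) = e2pi (-t) := by
  rw [e2pi, e2pi, ← Complex.exp_conj]
  congr 1
  simp only [map_mul, Complex.conj_I, Complex.conj_ofReal, Complex.ofReal_neg, map_ofNat]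
  ring

lemma e2pi_eq_one {t : ℝ} (h : e2pi t = 1) : ∃ n : ℤ, (n : ℝ) = t := by
  rw [e2pi, Complex.exp_eq_one_iff] at h
  obtain ⟨n, hn⟩ := h
  refine ⟨n, ?_⟩
  have h2 : (2 * (Real.pi:ℂ) * I) ≠ 0 := by
    simp [Real.pi_ne_zero, Complex.I_ne_zero]
  have : (2 * (Real.pi:ℂ) * I) * (t:ℂ) = (2 * (Real.pi:ℂ) * I) * (n:ℂ) := by
    rw [hn]; ring
  have := mul_left_cancel₀ h2 this
  exact_mod_cast this.symm

open GaussianInt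

/-- `phi q w = e(Re(w/q))`. -/
def phi (q w : GaussianInt) : ℂ := e2pi ((toComplex w / toComplex q).re)

lemma phi_add (q w w' : GaussianInt) : phi q (w + w') = phi q w * phi q w' := by
  rw [phi, phi, phi, ← e2pi_add, map_add, add_div, Complex.add_re]

lemma conj_phi (q w : GaussianInt) : (starRingEnd ℂ) (phi q w) = phi q (-w) := by
  rw [phi, phi, conj_e2pi, map_neg, neg_div, Complex.neg_re]

lemma abs_phi (q w : GaussianInt) : ‖phi q w‖ = 1 := abs_e2pi _

lemma phi_dvd {q : GaussianInt} (hq : q ≠ 0) {w : GaussianInt} (h : q ∣ w) : phi q w = 1 := by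
  obtain ⟨m, rfl⟩ := h
  have hq' : toComplex q ≠ 0 := by simpa using hq
  rw [phi, map_mul, mul_comm, mul_div_assoc, div_self hq', mul_one]
  rw [show (toComplex m).re = ((m.re : ℤ) : ℝ) by rw [toComplex_def]; simp]
  exact e2pi_int _

lemma phi_congr {q : GaussianInt} (hq : q ≠ 0) {w w' : GaussianInt}
    (h : Ideal.Quotient.mk (Ideal.span {q}) w = Ideal.Quotient.mk (Ideal.span {q}) w') :
    phi q w = phi q w' := by
  rw [Ideal.Quotient.mk_eq_mk_iff_sub_mem, Ideal.mem_span_singleton] at h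
  have : w = w' + (w - w') := by ring
  rw [this, phi_add, phi_dvd hq h, mul_one]

/-- If both coordinates of `w/q` are integers then `q ∣ w`. -/
lemma dvd_of_int_coords {q : GaussianInt} (hq : q ≠ 0) {w : GaussianInt} {x y : ℤ}
    (hx : ((x:ℝ)) = (toComplex w / toComplex q).re) (hy : ((y:ℝ)) = (toComplex w / toComplex q).im) :
    q ∣ w := by
  have hq' : toComplex q ≠ 0 := by simpa using hq
  refine ⟨⟨x, y⟩, ?_⟩
  rw [← toComplex_inj, map_mul]
  rw [eq_comm, mul_comm, ← eq_div_iff hq']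
  apply Complex.ext
  · simp; exact hx
  · simp; exact hy

lemma norm_coords (n : GaussianInt) : ((Zsqrtd.norm n : ℝ)) = (n.re:ℝ)^2 + (n.im:ℝ)^2 := by
  rw [Zsqrtd.norm]
  push_cast
  ring

lemma ball_subset (K : ℝ) :
    ∀ n ∈ {n : GaussianInt | (Zsqrtd.norm n : ℝ) ≤ K},
      n.re ∈ Finset.Icc (-⌊Real.sqrt K⌋) ⌊Real.sqrt K⌋ ∧
      n.im ∈ Finset.Icc (-⌊Real.sqrt K⌋) ⌊Real.sqrt K⌋ := by
  intro n hn
  simp only [Set.mem_setOf_eq, norm_coords] at hn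
  have hK : 0 ≤ K := by nlinarith [sq_nonneg ((n.re:ℝ)), sq_nonneg ((n.im:ℝ))]
  have key : ∀ x : ℤ, (x:ℝ)^2 ≤ K → x ∈ Finset.Icc (-⌊Real.sqrt K⌋) ⌊Real.sqrt K⌋ := by
    intro x hx
    have h1 : |(x:ℝ)| ≤ Real.sqrt K := by
      rw [← Real.sqrt_sq_eq_abs]
      exact Real.sqrt_le_sqrt hx
    rw [abs_le] at h1
    simp only [Finset.mem_Icc]
    constructor
    · have := Int.le_floor.mpr (show ((-x:ℤ):ℝ) ≤ Real.sqrt K by push_cast; linarith)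
      linarith
    · exact Int.le_floor.mpr h1.2
  exact ⟨key n.re (by nlinarith [sq_nonneg ((n.im:ℝ))]), key n.im (by nlinarith [sq_nonneg ((n.re:ℝ))])⟩

lemma ball_finite (K : ℝ) : {n : GaussianInt | (Zsqrtd.norm n : ℝ) ≤ K}.Finite := by
  set B := ⌊Real.sqrt K⌋
  apply Set.Finite.of_finite_image (f := fun n : GaussianInt => (n.re, n.im))
  · apply Set.Finite.subset (Set.finite_Icc ((-B : ℤ), (-B:ℤ)) ((B:ℤ), (B:ℤ)))
    rintro p ⟨n, hn, rfl⟩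
    obtain ⟨h1, h2⟩ := ball_subset K n hn
    simp only [Finset.mem_Icc] at h1 h2
    refine ⟨⟨?_, ?_⟩, ⟨?_, ?_⟩⟩ <;> simp <;> omega
  · intro n _ m _ h
    simp only [Prod.mk.injEq] at h
    exact Zsqrtd.ext h.1 h.2

/-- The ball as a Finset. -/
def ballF (K : ℝ) : Finset GaussianInt := (ball_finite K).toFinset

lemma mem_ballF {K : ℝ} {n : GaussianInt} : n ∈ ballF K ↔ (Zsqrtd.norm n : ℝ) ≤ K := by
  simp [ballF, Set.Finite.mem_toFinset]

lemma card_ballF {K : ℝ} (hK : 0 ≤ K) : ((ballF K).card : ℝ) ≤ 6 * K + 3 := by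
  set B := ⌊Real.sqrt K⌋ with hB
  have hB0 : 0 ≤ B := Int.floor_nonneg.mpr (Real.sqrt_nonneg K)
  have hcard : (ballF K).card ≤ ((Finset.Icc (-B) B) ×ˢ (Finset.Icc (-B) B)).card := by
    apply Finset.card_le_card_of_injOn (fun n => (n.re, n.im))
    · intro n hn
      rw [Finset.mem_coe, Finset.mem_product]
      exact ball_subset K n ((Set.Finite.mem_toFinset _).mp hn)
    · intro n _ m _ h
      simp only [Prod.mk.injEq] at h
      exact Zsqrtd.ext h.1 h.2
  have hIcc : ((Finset.Icc (-B) B).card : ℝ) = 2 * (B:ℝ) + 1 := by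
    rw [Int.card_Icc]
    have h4 : (B + 1 - -B) = 2*B + 1 := by ring
    rw [h4]
    have h5 : ((2*B+1).toNat : ℤ) = 2*B+1 := Int.toNat_of_nonneg (by omega)
    have h6 : (((2*B+1).toNat : ℕ):ℝ) = ((((2*B+1).toNat:ℤ)):ℝ) := by push_cast; ring
    rw [h6, h5]; push_cast; ring
  have hsq : ((Finset.Icc (-B) B) ×ˢ (Finset.Icc (-B) B)).card
      = (Finset.Icc (-B) B).card * (Finset.Icc (-B) B).card := Finset.card_product _ _
  have hBK : (B : ℝ) ≤ Real.sqrt K := Int.floor_le _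
  have hKs : Real.sqrt K ^ 2 = K := Real.sq_sqrt hK
  have h2 : 2 * Real.sqrt K ≤ K + 1 := by nlinarith [sq_nonneg (Real.sqrt K - 1)]
  have hBR : (0:ℝ) ≤ (B:ℝ) := by exact_mod_cast hB0
  calc ((ballF K).card : ℝ)
      ≤ (((Finset.Icc (-B) B).card * (Finset.Icc (-B) B).card : ℕ) : ℝ) := by
        exact_mod_cast hcard.trans_eq hsq
    _ = (2*(B:ℝ)+1) * (2*(B:ℝ)+1) := by rw [Nat.cast_mul, hIcc]
    _ ≤ (2*Real.sqrt K+1) * (2*Real.sqrt K+1) := by nlinarith [Real.sqrt_nonneg K]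
    _ ≤ 6 * K + 3 := by nlinarith [Real.sqrt_nonneg K]

section Quot

variable (q : GaussianInt)

/-- The quotient ring. -/
abbrev QR := GaussianInt ⧸ Ideal.span {q}

lemma mk_mod (x : GaussianInt) :
    Ideal.Quotient.mk (Ideal.span {q}) (x % q) = Ideal.Quotient.mk (Ideal.span {q}) x := by
  rw [Ideal.Quotient.mk_eq_mk_iff_sub_mem, Ideal.mem_span_singleton]
  refine ⟨-(x / q), ?_⟩
  have := EuclideanDomain.div_add_mod x q
  have h2 : x % q - x = -(q * (x/q)) := by
    rw [eq_comm, neg_eq_iff_add_eq_zero]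
    linear_combination this
  rw [h2]; ring

variable {q} (hq : q ≠ 0)
include hq

lemma QR_finite : Finite (QR q) := by
  have hsurj : Function.Surjective
      (fun r : ballF ((Zsqrtd.norm q : ℝ)) => Ideal.Quotient.mk (Ideal.span {q}) (r : GaussianInt)) := by
    intro x
    obtain ⟨r, rfl⟩ := Ideal.Quotient.mk_surjective x
    have hmem : r % q ∈ ballF ((Zsqrtd.norm q : ℝ)) := by
      rw [mem_ballF]
      exact_mod_cast (GaussianInt.norm_mod_lt r hq).le
    exact ⟨⟨r % q, hmem⟩, mk_mod q r⟩
  exact Finite.of_surjective _ hsurj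

end Quot

open Complex

/-- `T` is a reduced residue system modulo `q` in `ℤ[i]`: the reduction map is injective
on `T` and its image is exactly the set of units of `ℤ[i]/(q)`. -/
def IsRRS (q : GaussianInt) (T : Finset GaussianInt) : Prop :=
  Set.InjOn (fun r => Ideal.Quotient.mk (Ideal.span {q}) r) ↑T ∧
  (fun r => Ideal.Quotient.mk (Ideal.span {q}) r) '' ↑T = {x | IsUnit x}

/-- The inner exponential sum `∑_{n ∈ ℤ[i], N(n) ≤ N} a_n e(Tr(n r /(2q)))`,
where `Tr(x) = 2 Re x`. -/
def sieveTerm (a : GaussianInt → ℂ) (N : ℝ) (q r : GaussianInt) : ℂ :=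
  ∑ᶠ n ∈ {n : GaussianInt | (Zsqrtd.norm n : ℝ) ≤ N},
    a n * e2pi (2 * (GaussianInt.toComplex (n * r) / (2 * GaussianInt.toComplex q)).re)

/-- `Z = ∑_{N(n) ≤ N} |a_n|²`. -/
def Zsum (a : GaussianInt → ℂ) (N : ℝ) : ℝ :=
  ∑ᶠ n ∈ {n : GaussianInt | (Zsqrtd.norm n : ℝ) ≤ N}, ‖a n‖ ^ 2

/-- Large sieve bound for an individual modulus `q ∈ ℤ[i] \ {0}`. -/
theorem largeSieve_gaussian_individual :
    ∃ C : ℝ, 0 < C ∧ ∀ q : GaussianInt, q ≠ 0 → ∀ N : ℝ, 1 ≤ N →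
      ∀ (a : GaussianInt → ℂ) (T : Finset GaussianInt), IsRRS q T →
      (∑ r ∈ T, ‖sieveTerm a N q r‖ ^ 2)
        ≤ C * ((Zsqrtd.norm q : ℝ) + N) * Zsum a N := by
  classical
  refine ⟨216, by norm_num, ?_⟩
  intro q hq N hN a T hT
  have : Fintype (QR q) := @Fintype.ofFinite _ (QR_finite hq)
  set mk : GaussianInt →+* QR q := Ideal.Quotient.mk (Ideal.span {q}) with hmk
  set σ : QR q → GaussianInt := Function.surjInv Ideal.Quotient.mk_surjective with hσdef
  have hσ : ∀ x, mk (σ x) = x := fun x => Function.surjInv_eq _ x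
  set F : Finset GaussianInt := ballF N with hF
  set S : GaussianInt → ℂ := fun r => ∑ n ∈ F, a n * phi q (n * r) with hS
  set nq : ℝ := (Zsqrtd.norm q : ℝ) with hnq
  have hnq1 : 1 ≤ nq := by
    have h := GaussianInt.norm_pos.mpr hq
    have h2 : (1:ℤ) ≤ Zsqrtd.norm q := h
    rw [hnq]
    exact_mod_cast h2
  have hnq0 : 0 < nq := lt_of_lt_of_le one_pos hnq1
  -- sieveTerm = S
  have hsieve : ∀ r, sieveTerm a N q r = S r := by
    intro r
    rw [sieveTerm, ← Set.Finite.coe_toFinset (ball_finite N), finsum_mem_coe_finset]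
    refine Finset.sum_congr rfl fun n _ => ?_
    congr 1
    rw [phi]
    congr 1
    have h2 : GaussianInt.toComplex (n*r) / (2 * GaussianInt.toComplex q)
        = (GaussianInt.toComplex (n*r) / GaussianInt.toComplex q) / ((2:ℝ):ℂ) := by
      push_cast
      rw [div_div]
      ring_nf
    rw [h2, Complex.div_ofReal_re]
    ring
  -- Z sum
  set Z : ℝ := Zsum a N with hZdef
  have hZ : Z = ∑ n ∈ F, ‖a n‖ ^ 2 := by
    rw [hZdef, Zsum, ← Set.Finite.coe_toFinset (ball_finite N), finsum_mem_coe_finset]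
    rfl
  have hZ0 : 0 ≤ Z := by
    rw [hZ]; positivity
  -- periodicity of S
  have hSper : ∀ r r', mk r = mk r' → S r = S r' := by
    intro r r' h
    refine Finset.sum_congr rfl fun n _ => ?_
    congr 1
    refine phi_congr hq ?_
    show mk (n * r) = mk (n * r')
    rw [map_mul, map_mul, h]
  -- Step 1 : sum over T is at most sum over quotient
  set B : ℝ := ∑ x : QR q, ‖S (σ x)‖ ^ 2 with hB
  have step1 : (∑ r ∈ T, ‖sieveTerm a N q r‖ ^ 2) ≤ B := by
    have h1 : ∀ r ∈ T, ‖sieveTerm a N q r‖ ^ 2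
        = ‖S (σ (mk r))‖ ^ 2 := by
      intro r _
      rw [hsieve, hSper r (σ (mk r)) (by rw [hσ])]
    rw [Finset.sum_congr rfl h1]
    have h2 : ∑ r ∈ T, ‖S (σ (mk r))‖ ^ 2
        = ∑ x ∈ T.image (fun r => mk r), ‖S (σ x)‖ ^ 2 := by
      rw [Finset.sum_image (fun x hx y hy h => hT.1 hx hy h)]
    rw [h2, hB]
    apply Finset.sum_le_sum_of_subset_of_nonneg (Finset.subset_univ _)
    intro i _ _
    positivity
  -- orthogonality
  have horth : ∀ c : GaussianInt, (∑ x : QR q, phi q (c * σ x))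
      = if q ∣ c then (Fintype.card (QR q) : ℂ) else 0 := by
    intro c
    by_cases hd : q ∣ c
    · rw [if_pos hd]
      have : ∀ x : QR q, phi q (c * σ x) = 1 := fun x => phi_dvd hq (hd.mul_right _)
      simp [this, Finset.card_univ]
    · rw [if_neg hd]
      -- find r0 with phi q (c * r0) ≠ 1
      have hr0 : ∃ r0 : GaussianInt, phi q (c * r0) ≠ 1 := by
        by_contra h0
        push_neg at h0
        have h1 := h0 1
        have h2 := h0 ⟨0, 1⟩
        rw [mul_one, phi] at h1
        rw [phi] at h2
        obtain ⟨k1, hk1⟩ := e2pi_eq_one h1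
        obtain ⟨k2, hk2⟩ := e2pi_eq_one h2
        apply hd
        refine dvd_of_int_coords hq (x := k1) (y := -k2) hk1 ?_
        have hI : GaussianInt.toComplex (c * ⟨0,1⟩) = GaussianInt.toComplex c * Complex.I := by
          rw [map_mul]
          congr 1
          rw [GaussianInt.toComplex_def]
          simp
        rw [hI, mul_comm (GaussianInt.toComplex c) Complex.I, mul_div_assoc, Complex.I_mul_re] at hk2
        push_cast
        linarith
      obtain ⟨r0, hr0⟩ := hr0
      have key : (∑ x : QR q, phi q (c * σ x)) * phi q (c * r0)
          = ∑ x : QR q, phi q (c * σ x) := by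
        rw [Finset.sum_mul]
        have h3 : ∀ x : QR q, phi q (c * σ x) * phi q (c * r0) = phi q (c * σ (x + mk r0)) := by
          intro x
          rw [← phi_add]
          refine (phi_congr hq ?_).symm
          show mk (c * σ (x + mk r0)) = mk (c * σ x + c * r0)
          rw [map_mul, hσ, map_add, map_mul, map_mul, hσ]
          ring
        rw [Finset.sum_congr rfl (fun x _ => h3 x)]
        exact Equiv.sum_comp (Equiv.addRight (mk r0)) (fun x => phi q (c * σ x))
      have h4 : (∑ x : QR q, phi q (c * σ x)) * (phi q (c * r0) - 1) = 0 := by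
        linear_combination key
      rcases mul_eq_zero.mp h4 with h5 | h5
      · exact h5
      · exact absurd (sub_eq_zero.mp h5) hr0
  -- Step 2 : expand B
  set D : ℂ := ∑ n ∈ F, ∑ m ∈ F, if q ∣ n - m then a n * (starRingEnd ℂ) (a m) else 0 with hD
  have step2 : (B : ℂ) = (Fintype.card (QR q) : ℂ) * D := by
    have e1 : (B : ℂ) = ∑ x : QR q, S (σ x) * (starRingEnd ℂ) (S (σ x)) := by
      rw [hB]
      push_cast [Complex.sq_norm]
      exact Finset.sum_congr rfl fun x _ => (Complex.mul_conj _).symm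
    have e2 : ∀ r : GaussianInt, S r * (starRingEnd ℂ) (S r)
        = ∑ n ∈ F, ∑ m ∈ F, (a n * (starRingEnd ℂ) (a m)) * phi q ((n - m) * r) := by
      intro r
      rw [hS, map_sum, Finset.sum_mul_sum]
      refine Finset.sum_congr rfl fun n _ => Finset.sum_congr rfl fun m _ => ?_
      rw [map_mul, conj_phi]
      have : phi q (n * r) * phi q (-(m * r)) = phi q ((n - m) * r) := by
        rw [← phi_add]
        congr 1
        ring
      calc a n * phi q (n * r) * ((starRingEnd ℂ) (a m) * phi q (-(m * r)))
          = (a n * (starRingEnd ℂ) (a m)) * (phi q (n * r) * phi q (-(m * r))) := by ring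
        _ = (a n * (starRingEnd ℂ) (a m)) * phi q ((n - m) * r) := by rw [this]
    rw [e1, Finset.sum_congr rfl (fun x _ => e2 (σ x))]
    rw [Finset.sum_comm]
    have e3 : ∀ n, ∑ x : QR q, ∑ m ∈ F, (a n * (starRingEnd ℂ) (a m)) * phi q ((n - m) * σ x)
        = ∑ m ∈ F, (a n * (starRingEnd ℂ) (a m)) * (if q ∣ n - m then (Fintype.card (QR q) : ℂ) else 0) := by
      intro n
      rw [Finset.sum_comm]
      exact Finset.sum_congr rfl fun m _ => by rw [← Finset.mul_sum, horth (n - m)]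
    rw [Finset.sum_congr rfl (fun n _ => e3 n), hD, Finset.mul_sum]
    refine Finset.sum_congr rfl fun n _ => ?_
    rw [Finset.mul_sum]
    refine Finset.sum_congr rfl fun m _ => ?_
    split_ifs <;> ring
  -- counting lemma
  have hcnt : ∀ n ∈ F, ((F.filter (fun m => q ∣ n - m)).card : ℝ) ≤ 24 * N / nq + 3 := by
    intro n hn
    have hN4 : 0 ≤ 4 * N / nq := by positivity
    have hmap : ∀ m ∈ F.filter (fun m => q ∣ n - m), (n - m) / q ∈ ballF (4 * N / nq) := by
      intro m hm
      rw [Finset.mem_filter] at hm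
      obtain ⟨hmF, hdvd⟩ := hm
      have heq : q * ((n - m) / q) = n - m := EuclideanDomain.mul_div_cancel' hq hdvd
      have hnorm : (Zsqrtd.norm q : ℝ) * (Zsqrtd.norm ((n - m)/q) : ℝ) = (Zsqrtd.norm (n - m) : ℝ) := by
        rw [← Int.cast_mul, ← Zsqrtd.norm_mul, heq]
      have hnn : (Zsqrtd.norm n : ℝ) ≤ N := mem_ballF.mp hn
      have hmm : (Zsqrtd.norm m : ℝ) ≤ N := mem_ballF.mp hmF
      have hsub : (Zsqrtd.norm (n - m) : ℝ) ≤ 4 * N := by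
        rw [norm_coords] at hnn hmm ⊢
        have hre : ((n - m).re : ℝ) = (n.re : ℝ) - (m.re : ℝ) := by
          rw [Zsqrtd.re_sub]; push_cast; ring
        have him : ((n - m).im : ℝ) = (n.im : ℝ) - (m.im : ℝ) := by
          rw [Zsqrtd.im_sub]; push_cast; ring
        rw [hre, him]
        nlinarith [sq_nonneg ((n.re:ℝ) + m.re), sq_nonneg ((n.im:ℝ) + m.im)]
      rw [mem_ballF, le_div_iff₀ hnq0, mul_comm]
      rw [hnq]
      linarith [hnorm]
    have hinj : Set.InjOn (fun m => (n - m) / q) ↑(F.filter (fun m => q ∣ n - m)) := by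
      intro m hm m' hm' h
      simp only [Finset.coe_filter, Set.mem_setOf_eq] at hm hm'
      have e1 : q * ((n - m) / q) = n - m := EuclideanDomain.mul_div_cancel' hq hm.2
      have e2 : q * ((n - m') / q) = n - m' := EuclideanDomain.mul_div_cancel' hq hm'.2
      have h' : (n - m) / q = (n - m') / q := h
      have : n - m = n - m' := by rw [← e1, ← e2, h']
      linear_combination -this
    have h1 := Finset.card_le_card_of_injOn _ hmap hinj
    calc ((F.filter (fun m => q ∣ n - m)).card : ℝ)
        ≤ ((ballF (4 * N / nq)).card : ℝ) := by exact_mod_cast h1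
      _ ≤ 6 * (4 * N / nq) + 3 := card_ballF hN4
      _ = 24 * N / nq + 3 := by ring
  -- bound |D|
  have hDb : ‖D‖ ≤ (24 * N / nq + 3) * Z := by
    have habs : ‖D‖ ≤ ∑ n ∈ F, ∑ m ∈ F,
        (if q ∣ n - m then ‖a n‖ * ‖a m‖ else 0) := by
      rw [hD]
      refine (norm_sum_le _ _).trans ?_
      refine Finset.sum_le_sum fun n _ => ?_
      refine (norm_sum_le _ _).trans ?_
      refine Finset.sum_le_sum fun m _ => ?_
      rw [apply_ite norm]
      split_ifs with h
      · rw [norm_mul, Complex.norm_conj]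
      · simp
    have hsymm : (∑ n ∈ F, ∑ m ∈ F, (if q ∣ n - m then ‖a m‖^2 else 0))
        = ∑ n ∈ F, ∑ m ∈ F, (if q ∣ n - m then ‖a n‖^2 else 0) := by
      rw [Finset.sum_comm]
      refine Finset.sum_congr rfl fun n _ => Finset.sum_congr rfl fun m _ => ?_
      exact if_congr dvd_sub_comm rfl rfl
    have hE : (∑ n ∈ F, ∑ m ∈ F, (if q ∣ n - m then ‖a n‖ * ‖a m‖ else 0))
        ≤ ∑ n ∈ F, ∑ m ∈ F, (if q ∣ n - m then ‖a n‖^2 else 0) := by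
      have key : ∀ n m : GaussianInt,
          2 * (if q ∣ n - m then ‖a n‖ * ‖a m‖ else 0)
          ≤ (if q ∣ n - m then ‖a n‖^2 else 0)
            + (if q ∣ n - m then ‖a m‖^2 else 0) := by
        intro n m
        split_ifs with h
        · nlinarith [sq_nonneg (‖a n‖ - ‖a m‖)]
        · norm_num
      have h2 : 2 * (∑ n ∈ F, ∑ m ∈ F, (if q ∣ n - m then ‖a n‖ * ‖a m‖ else 0))
          ≤ (∑ n ∈ F, ∑ m ∈ F, (if q ∣ n - m then ‖a n‖^2 else 0))
            + (∑ n ∈ F, ∑ m ∈ F, (if q ∣ n - m then ‖a m‖^2 else 0)) := by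
        rw [← Finset.sum_add_distrib]
        simp only [Finset.mul_sum]
        refine Finset.sum_le_sum fun n _ => ?_
        rw [← Finset.sum_add_distrib]
        exact Finset.sum_le_sum fun m _ => key n m
      linarith [h2, hsymm]
    have hcount : (∑ n ∈ F, ∑ m ∈ F, (if q ∣ n - m then ‖a n‖^2 else 0))
        ≤ (24 * N / nq + 3) * Z := by
      have hinner : ∀ n, (∑ m ∈ F, (if q ∣ n - m then ‖a n‖^2 else 0))
          = ((F.filter (fun m => q ∣ n - m)).card : ℝ) * ‖a n‖^2 := by
        intro n
        rw [← Finset.sum_filter, Finset.sum_const, nsmul_eq_mul]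
      rw [Finset.sum_congr rfl (fun n _ => hinner n), hZ, Finset.mul_sum]
      refine Finset.sum_le_sum fun n hn => ?_
      have := hcnt n hn
      nlinarith [sq_nonneg (‖a n‖), this, Nat.cast_nonneg (α := ℝ) (F.filter (fun m => q ∣ n - m)).card]
    exact habs.trans (hE.trans hcount)
  -- bound card of quotient
  have hcard : ((Fintype.card (QR q)) : ℝ) ≤ 9 * nq := by
    have hsurj : Set.SurjOn (fun r : GaussianInt => mk r) ↑(ballF nq)
        ↑(Finset.univ : Finset (QR q)) := by
      intro x _
      obtain ⟨r, rfl⟩ := Ideal.Quotient.mk_surjective x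
      refine ⟨r % q, ?_, mk_mod q r⟩
      rw [Finset.mem_coe, mem_ballF, hnq]
      exact_mod_cast (GaussianInt.norm_mod_lt r hq).le
    have h1 := Finset.card_le_card_of_surjOn _ hsurj
    have h2 : Fintype.card (QR q) = (Finset.univ : Finset (QR q)).card := rfl
    have h3 : ((ballF nq).card : ℝ) ≤ 6 * nq + 3 := card_ballF (le_of_lt hnq0)
    have h4 : ((Fintype.card (QR q)) : ℝ) ≤ ((ballF nq).card : ℝ) := by
      rw [h2]; exact_mod_cast h1
    linarith
  -- assemble
  have hB0 : 0 ≤ B := by rw [hB]; positivity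
  have hBeq : B = (Fintype.card (QR q) : ℝ) * ‖D‖ := by
    have habsB : ‖(B:ℂ)‖ = B := by rw [Complex.norm_of_nonneg hB0]
    rw [← habsB, step2, norm_mul, Complex.norm_natCast]
  calc (∑ r ∈ T, ‖sieveTerm a N q r‖ ^ 2) ≤ B := step1
    _ = (Fintype.card (QR q) : ℝ) * ‖D‖ := hBeq
    _ ≤ (9 * nq) * ((24 * N / nq + 3) * Z) := by
        apply mul_le_mul hcard hDb (norm_nonneg _) (by linarith)
    _ = (216 * N + 27 * nq) * Z := by field_simp; ring
    _ ≤ 216 * (nq + N) * Z := by nlinarith [hZ0, hnq0, hN]
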